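/- Let X and Y be Banach spaces, N ∈ ℕ and 1 < p, q < ∞ with Nq ≥ p. Suppose that X contains no subspace isomorphic to ℓ₁, that there exists a bounded surjective linear operator from X onto ℓ_p, and that there exists a linear isomorphic embedding of ℓ_q into Y (a bounded linear operator ℓ_q → Y that is bounded below). Then there exists a continuous N-homogeneous polynomial P from X to Y that is not weakly sequentially continuous. -/

import Mathlib

set_option maxHeartbeats 1000000


open Filter Topology
open scoped ENNReal



/-- power-sum monotonicity: `∑ b i ^ s ≤ (∑ b i ^ r)^(s/r)` for `0 < r ≤ s`, `b ≥ 0`. -/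
theorem aux_sum_rpow_mono {b : ℕ → ℝ} (hb : ∀ i, 0 ≤ b i) {r s : ℝ} (hr : 0 < r) (hrs : r ≤ s)
    (hsum : Summable fun i => b i ^ r) :
    Summable (fun i => b i ^ s) ∧ (∑' i, b i ^ s) ≤ (∑' i, b i ^ r) ^ (s / r) := by
  set B := ∑' i, b i ^ r with hB
  have hBnn : 0 ≤ B := tsum_nonneg fun i => Real.rpow_nonneg (hb i) r
  have hle : ∀ i, b i ^ r ≤ B := fun i => Summable.le_tsum hsum i fun j _ => Real.rpow_nonneg (hb j) r
  have hexp : 0 ≤ (s - r) / r := div_nonneg (by linarith) hr.le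
  have key : ∀ i, b i ^ s ≤ b i ^ r * B ^ ((s - r) / r) := by
    intro i
    have h1 : b i ^ s = b i ^ r * b i ^ (s - r) := by
      rw [← Real.rpow_add' (hb i)]
      · ring_nf
      · intro h; linarith
    rw [h1]
    gcongr
    · exact Real.rpow_nonneg (hb i) r
    · have h2 : b i ^ (s - r) = (b i ^ r) ^ ((s - r) / r) := by
        rw [← Real.rpow_mul (hb i)]
        congr 1
        field_simp
      rw [h2]
      exact Real.rpow_le_rpow (Real.rpow_nonneg (hb i) r) (hle i) hexp
  have hsum2 : Summable (fun i => b i ^ s) :=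
    Summable.of_nonneg_of_le (fun i => Real.rpow_nonneg (hb i) s) key
      (hsum.mul_right _)
  refine ⟨hsum2, ?_⟩
  calc (∑' i, b i ^ s) ≤ ∑' i, b i ^ r * B ^ ((s - r) / r) :=
        Summable.tsum_le_tsum key hsum2 (hsum.mul_right _)
    _ = B * B ^ ((s - r) / r) := by rw [tsum_mul_right]
    _ = B ^ (1 : ℝ) * B ^ ((s - r) / r) := by rw [Real.rpow_one]
    _ = B ^ (s / r) := by
        rw [← Real.rpow_add' hBnn]
        · congr 1; field_simp; ring
        · intro h
          exfalso
          have : s / r > 0 := div_pos (lt_of_lt_of_le hr hrs) hr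
          rw [show (1 : ℝ) + (s - r)/r = s / r by field_simp; ring] at h
          linarith

/-- pointwise AM-GM for products: `∏ d j ≤ (1/N) * ∑ (d j)^N` for `d ≥ 0`, `0 < N`. -/
theorem aux_prod_le_sum_pow {N : ℕ} (hN : 0 < N) (d : Fin N → ℝ) (hd : ∀ j, 0 ≤ d j) :
    (∏ j, d j) ≤ (1 / N) * ∑ j, (d j) ^ N := by
  have hNR : (0:ℝ) < N := Nat.cast_pos.mpr hN
  have h := Real.geom_mean_le_arith_mean_weighted Finset.univ (fun _ : Fin N => 1 / (N:ℝ))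
      (fun j => d j ^ N) (fun i _ => div_nonneg zero_le_one hNR.le)
      (by simp [Finset.sum_const, Finset.card_univ]; field_simp)
      (fun i _ => pow_nonneg (hd i) N)
  calc (∏ j, d j) = ∏ j, ((d j ^ N : ℝ) ^ (1 / (N:ℝ))) := by
        refine Finset.prod_congr rfl fun j _ => ?_
        rw [← Real.rpow_natCast (d j) N, ← Real.rpow_mul (hd j)]
        rw [mul_one_div, div_self (ne_of_gt hNR), Real.rpow_one]
    _ ≤ ∑ j, (1 / (N:ℝ)) * d j ^ N := h
    _ = (1 / N) * ∑ j, (d j) ^ N := by rw [Finset.mul_sum]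

section diag

variable {𝕜 : Type*} [RCLike 𝕜] {p q : ℝ≥0∞} [Fact (1 ≤ p)] [Fact (1 ≤ q)] {N : ℕ}

theorem aux_pointwise_prod {N : ℕ} (hN : 0 < N) {t : ℝ} (ht : 0 < t) (c : Fin N → ℝ)
    (hc : ∀ j, 0 ≤ c j) :
    (∏ j, c j ^ t) ≤ (1 / N) * ∑ j, c j ^ ((N : ℝ) * t) := by
  have h := aux_prod_le_sum_pow hN (fun j => c j ^ t) (fun j => Real.rpow_nonneg (hc j) t)
  calc (∏ j, c j ^ t) ≤ (1 / N) * ∑ j, (c j ^ t) ^ N := h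
    _ = (1 / N) * ∑ j, c j ^ ((N : ℝ) * t) := by
        congr 1
        refine Finset.sum_congr rfl fun j _ => ?_
        rw [← Real.rpow_natCast (c j ^ t) N, ← Real.rpow_mul (hc j), mul_comm t (N:ℝ)]

theorem aux_diag_mem (hp' : p ≠ ∞) (hq' : q ≠ ∞) (hN : 0 < N) (hpNq : p ≤ (N : ℝ≥0∞) * q)
    (b : Fin N → lp (fun _ : ℕ => 𝕜) p) :
    Memℓp (fun i : ℕ => ∏ j, (b j : ∀ _ : ℕ, 𝕜) i) q := by
  have hr1 : (1:ℝ) ≤ p.toReal := by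
    have := Fact.out (p := 1 ≤ p)
    simpa using ENNReal.toReal_mono hp' this
  have ht1 : (1:ℝ) ≤ q.toReal := by
    have := Fact.out (p := 1 ≤ q)
    simpa using ENNReal.toReal_mono hq' this
  have hr0 : 0 < p.toReal := lt_of_lt_of_le one_pos hr1
  have ht0 : 0 < q.toReal := lt_of_lt_of_le one_pos ht1
  have hrNt : p.toReal ≤ (N : ℝ) * q.toReal := by
    have h1 : ((N : ℝ≥0∞) * q).toReal = (N : ℝ) * q.toReal := by
      rw [ENNReal.toReal_mul]; simp
    have := ENNReal.toReal_mono (by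
      refine ENNReal.mul_ne_top ?_ hq'
      simp) hpNq
    rwa [h1] at this
  set t := q.toReal
  -- summability at exponent N*t for each component
  have hsumNt : ∀ j, Summable (fun i => ‖(b j : ∀ _ : ℕ, 𝕜) i‖ ^ ((N:ℝ) * t)) := by
    intro j
    exact (aux_sum_rpow_mono (fun i => norm_nonneg _) hr0 hrNt
      ((lp.memℓp (b j)).summable hr0)).1
  apply memℓp_gen
  have key : ∀ i : ℕ, ‖∏ j, (b j : ∀ _ : ℕ, 𝕜) i‖ ^ t
      ≤ (1 / N) * ∑ j, ‖(b j : ∀ _ : ℕ, 𝕜) i‖ ^ ((N:ℝ) * t) := by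
    intro i
    rw [norm_prod]
    rw [← Real.finset_prod_rpow _ _ (fun j _ => norm_nonneg _) t]
    exact aux_pointwise_prod hN ht0 _ (fun j => norm_nonneg _)
  refine Summable.of_nonneg_of_le (fun i => Real.rpow_nonneg (norm_nonneg _) _) key ?_
  exact (summable_sum (fun j _ => hsumNt j)).mul_left _

theorem aux_diag_norm (hp' : p ≠ ∞) (hq' : q ≠ ∞) (hN : 0 < N) (hpNq : p ≤ (N : ℝ≥0∞) * q)
    (b : Fin N → lp (fun _ : ℕ => 𝕜) p) :
    ‖(⟨fun i : ℕ => ∏ j, (b j : ∀ _ : ℕ, 𝕜) i, aux_diag_mem hp' hq' hN hpNq b⟩ :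
      lp (fun _ : ℕ => 𝕜) q)‖ ≤ 1 * ∏ j, ‖b j‖ := by
  rw [one_mul]
  have hr1 : (1:ℝ) ≤ p.toReal := by
    have := Fact.out (p := 1 ≤ p)
    simpa using ENNReal.toReal_mono hp' this
  have ht1 : (1:ℝ) ≤ q.toReal := by
    have := Fact.out (p := 1 ≤ q)
    simpa using ENNReal.toReal_mono hq' this
  have hr0 : 0 < p.toReal := lt_of_lt_of_le one_pos hr1
  have ht0 : 0 < q.toReal := lt_of_lt_of_le one_pos ht1
  have hrNt : p.toReal ≤ (N : ℝ) * q.toReal := by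
    have h1 : ((N : ℝ≥0∞) * q).toReal = (N : ℝ) * q.toReal := by
      rw [ENNReal.toReal_mul]; simp
    have := ENNReal.toReal_mono (by refine ENNReal.mul_ne_top ?_ hq'; simp) hpNq
    rwa [h1] at this
  set r := p.toReal
  set t := q.toReal
  set F : lp (fun _ : ℕ => 𝕜) q :=
    ⟨fun i : ℕ => ∏ j, (b j : ∀ _ : ℕ, 𝕜) i, aux_diag_mem hp' hq' hN hpNq b⟩ with hF
  by_cases hz : ∃ j, ‖b j‖ = 0
  · obtain ⟨j0, hj0⟩ := hz
    have hb0 : b j0 = 0 := norm_eq_zero.mp hj0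
    have : F = 0 := by
      apply lp.ext
      funext i
      show (∏ j, (b j : ∀ _ : ℕ, 𝕜) i) = (0 : lp (fun _ : ℕ => 𝕜) q) i
      rw [lp.coeFn_zero]
      refine Finset.prod_eq_zero (Finset.mem_univ j0) ?_
      rw [hb0, lp.coeFn_zero]
      rfl
    rw [this, norm_zero]
    exact Finset.prod_nonneg fun j _ => norm_nonneg _
  · push_neg at hz
    have hβ : ∀ j, 0 < ‖b j‖ := fun j => lt_of_le_of_ne (norm_nonneg _) (Ne.symm (hz j))
    -- tsum of coordinate norms at exponent N*t, bounded by ‖b j‖^(N*t)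
    have hsumNt : ∀ j, Summable (fun i => ‖(b j : ∀ _ : ℕ, 𝕜) i‖ ^ ((N:ℝ) * t)) ∧
        (∑' i, ‖(b j : ∀ _ : ℕ, 𝕜) i‖ ^ ((N:ℝ) * t)) ≤ ‖b j‖ ^ ((N:ℝ) * t) := by
      intro j
      obtain ⟨h1, h2⟩ := aux_sum_rpow_mono (fun i => norm_nonneg ((b j : ∀ _ : ℕ, 𝕜) i)) hr0 hrNt
        ((lp.memℓp (b j)).summable hr0)
      refine ⟨h1, h2.trans_eq ?_⟩
      rw [← lp.norm_rpow_eq_tsum hr0 (b j), ← Real.rpow_mul (norm_nonneg _)]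
      congr 1
      field_simp
      rfl
    -- main sum bound
    have hFsum : Summable (fun i => ‖(F : ∀ _ : ℕ, 𝕜) i‖ ^ t) := (lp.memℓp F).summable ht0
    have main : (∑' i, ‖(F : ∀ _ : ℕ, 𝕜) i‖ ^ t) ≤ ∏ j, ‖b j‖ ^ t := by
      have key : ∀ i : ℕ, ‖(F : ∀ _ : ℕ, 𝕜) i‖ ^ t ≤
          (∏ j, ‖b j‖ ^ t) * ((1 / N) * ∑ j, (‖(b j : ∀ _ : ℕ, 𝕜) i‖ / ‖b j‖) ^ ((N:ℝ) * t)) := by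
        intro i
        have hco : ‖(F : ∀ _ : ℕ, 𝕜) i‖ ^ t = ∏ j, ‖(b j : ∀ _ : ℕ, 𝕜) i‖ ^ t := by
          show ‖∏ j, (b j : ∀ _ : ℕ, 𝕜) i‖ ^ t = _
          rw [norm_prod, ← Real.finset_prod_rpow _ _ (fun j _ => norm_nonneg _) t]
        rw [hco]
        have expand : ∀ j : Fin N, ‖(b j : ∀ _ : ℕ, 𝕜) i‖ ^ t
            = ‖b j‖ ^ t * (‖(b j : ∀ _ : ℕ, 𝕜) i‖ / ‖b j‖) ^ t := by
          intro j
          rw [Real.div_rpow (norm_nonneg _) (norm_nonneg _), eq_comm, ← mul_div_assoc,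
            mul_div_cancel_left₀ _ (ne_of_gt (Real.rpow_pos_of_pos (hβ j) t))]
        calc (∏ j, ‖(b j : ∀ _ : ℕ, 𝕜) i‖ ^ t)
            = (∏ j, ‖b j‖ ^ t) * ∏ j, (‖(b j : ∀ _ : ℕ, 𝕜) i‖ / ‖b j‖) ^ t := by
              rw [← Finset.prod_mul_distrib]
              exact Finset.prod_congr rfl fun j _ => expand j
          _ ≤ (∏ j, ‖b j‖ ^ t) * ((1 / N) * ∑ j, (‖(b j : ∀ _ : ℕ, 𝕜) i‖ / ‖b j‖) ^ ((N:ℝ) * t)) := by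
              refine mul_le_mul_of_nonneg_left ?_
                (Finset.prod_nonneg fun j _ => Real.rpow_nonneg (norm_nonneg _) t)
              exact aux_pointwise_prod hN ht0 _ (fun j => div_nonneg (norm_nonneg _) (norm_nonneg _))
      have hsumdiv : ∀ j : Fin N, Summable (fun i => (‖(b j : ∀ _ : ℕ, 𝕜) i‖ / ‖b j‖) ^ ((N:ℝ) * t))
          ∧ (∑' i, (‖(b j : ∀ _ : ℕ, 𝕜) i‖ / ‖b j‖) ^ ((N:ℝ) * t)) ≤ 1 := by
        intro j
        have hdiv : ∀ i, (‖(b j : ∀ _ : ℕ, 𝕜) i‖ / ‖b j‖) ^ ((N:ℝ) * t)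
            = ‖(b j : ∀ _ : ℕ, 𝕜) i‖ ^ ((N:ℝ) * t) / ‖b j‖ ^ ((N:ℝ) * t) := fun i =>
          Real.div_rpow (norm_nonneg _) (norm_nonneg _) _
        constructor
        · simp only [hdiv]
          exact ((hsumNt j).1.div_const _)
        · calc (∑' i, (‖(b j : ∀ _ : ℕ, 𝕜) i‖ / ‖b j‖) ^ ((N:ℝ) * t))
              = (∑' i, ‖(b j : ∀ _ : ℕ, 𝕜) i‖ ^ ((N:ℝ) * t)) / ‖b j‖ ^ ((N:ℝ) * t) := by
                simp only [hdiv]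
                exact tsum_div_const
            _ ≤ 1 := by
                rw [div_le_one (Real.rpow_pos_of_pos (hβ j) _)]
                exact (hsumNt j).2
      calc (∑' i, ‖(F : ∀ _ : ℕ, 𝕜) i‖ ^ t)
          ≤ ∑' i, (∏ j, ‖b j‖ ^ t) * ((1 / N) * ∑ j, (‖(b j : ∀ _ : ℕ, 𝕜) i‖ / ‖b j‖) ^ ((N:ℝ) * t)) := by
            refine Summable.tsum_le_tsum key hFsum ?_
            exact ((summable_sum (fun j _ => (hsumdiv j).1)).mul_left _).mul_left _
        _ = (∏ j, ‖b j‖ ^ t) * ((1 / N) * ∑ j, ∑' i, (‖(b j : ∀ _ : ℕ, 𝕜) i‖ / ‖b j‖) ^ ((N:ℝ) * t)) := by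
            rw [tsum_mul_left, tsum_mul_left]
            congr 2
            exact (Summable.tsum_finsetSum (fun j _ => (hsumdiv j).1))
        _ ≤ (∏ j, ‖b j‖ ^ t) * ((1 / N) * ∑ j : Fin N, (1:ℝ)) := by
            refine mul_le_mul_of_nonneg_left (mul_le_mul_of_nonneg_left ?_ (by positivity))
              (Finset.prod_nonneg fun j _ => Real.rpow_nonneg (norm_nonneg _) t)
            exact Finset.sum_le_sum fun j _ => (hsumdiv j).2
        _ = ∏ j, ‖b j‖ ^ t := by
            simp only [Finset.sum_const, Finset.card_univ, Fintype.card_fin, nsmul_eq_mul, mul_one]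
            rw [show (1 / (N:ℝ)) * N = 1 by field_simp, mul_one]
    -- conclude via norm formula
    have hnorm : ‖F‖ = (∑' i, ‖(F : ∀ _ : ℕ, 𝕜) i‖ ^ t) ^ (1 / t) := lp.norm_eq_tsum_rpow ht0 F
    rw [hnorm]
    have h2 : (∏ j, ‖b j‖ ^ t) = (∏ j, ‖b j‖) ^ t :=
      Real.finset_prod_rpow _ _ (fun j _ => norm_nonneg _) t
    calc (∑' i, ‖(F : ∀ _ : ℕ, 𝕜) i‖ ^ t) ^ (1 / t)
        ≤ ((∏ j, ‖b j‖) ^ t) ^ (1 / t) := by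
          refine Real.rpow_le_rpow (tsum_nonneg fun i => Real.rpow_nonneg (norm_nonneg _) t)
            (main.trans_eq h2) (by positivity)
      _ = ∏ j, ‖b j‖ := by
          rw [← Real.rpow_mul (Finset.prod_nonneg fun j _ => norm_nonneg _)]
          rw [mul_one_div, div_self (ne_of_gt ht0), Real.rpow_one]

/-- The diagonal-product continuous multilinear map `(ℓ_p)^N → ℓ_q`. -/
noncomputable def diagCMM (hp' : p ≠ ∞) (hq' : q ≠ ∞) (hN : 0 < N)
    (hpNq : p ≤ (N : ℝ≥0∞) * q) :
    ContinuousMultilinearMap 𝕜 (fun _ : Fin N => lp (fun _ : ℕ => 𝕜) p)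
      (lp (fun _ : ℕ => 𝕜) q) :=
  MultilinearMap.mkContinuous
    { toFun := fun b => ⟨fun i : ℕ => ∏ j, (b j : ∀ _ : ℕ, 𝕜) i, aux_diag_mem hp' hq' hN hpNq b⟩
      map_update_add' := by
        intro inst b j x y
        apply lp.ext
        funext i
        show (∏ j', ((Function.update b j (x + y) j' : lp (fun _ : ℕ => 𝕜) p) : ∀ _ : ℕ, 𝕜) i)
          = (∏ j', ((Function.update b j x j' : lp (fun _ : ℕ => 𝕜) p) : ∀ _ : ℕ, 𝕜) i)
            + (∏ j', ((Function.update b j y j' : lp (fun _ : ℕ => 𝕜) p) : ∀ _ : ℕ, 𝕜) i)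
        have hup : ∀ (z : lp (fun _ : ℕ => 𝕜) p) (j' : Fin N),
            ((Function.update b j z j' : lp (fun _ : ℕ => 𝕜) p) : ∀ _ : ℕ, 𝕜) i
              = Function.update (fun j'' => ((b j'' : lp (fun _ : ℕ => 𝕜) p) : ∀ _ : ℕ, 𝕜) i) j
                  ((z : ∀ _ : ℕ, 𝕜) i) j' := fun z j' =>
          Function.apply_update (fun _ (v : lp (fun _ : ℕ => 𝕜) p) => (v : ∀ _ : ℕ, 𝕜) i) b j z j'
        have hadd : ((x + y : lp (fun _ : ℕ => 𝕜) p) : ∀ _ : ℕ, 𝕜) i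
            = (x : ∀ _ : ℕ, 𝕜) i + (y : ∀ _ : ℕ, 𝕜) i := rfl
        simp only [hup, hadd]
        rw [Finset.prod_update_of_mem (Finset.mem_univ j),
          Finset.prod_update_of_mem (Finset.mem_univ j),
          Finset.prod_update_of_mem (Finset.mem_univ j), add_mul]
      map_update_smul' := by
        intro inst b j c x
        apply lp.ext
        funext i
        show (∏ j', ((Function.update b j (c • x) j' : lp (fun _ : ℕ => 𝕜) p) : ∀ _ : ℕ, 𝕜) i)
          = c * (∏ j', ((Function.update b j x j' : lp (fun _ : ℕ => 𝕜) p) : ∀ _ : ℕ, 𝕜) i)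
        have hup : ∀ (z : lp (fun _ : ℕ => 𝕜) p) (j' : Fin N),
            ((Function.update b j z j' : lp (fun _ : ℕ => 𝕜) p) : ∀ _ : ℕ, 𝕜) i
              = Function.update (fun j'' => ((b j'' : lp (fun _ : ℕ => 𝕜) p) : ∀ _ : ℕ, 𝕜) i) j
                  ((z : ∀ _ : ℕ, 𝕜) i) j' := fun z j' =>
          Function.apply_update (fun _ (v : lp (fun _ : ℕ => 𝕜) p) => (v : ∀ _ : ℕ, 𝕜) i) b j z j'
        have hsmul : ((c • x : lp (fun _ : ℕ => 𝕜) p) : ∀ _ : ℕ, 𝕜) i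
            = c * (x : ∀ _ : ℕ, 𝕜) i := rfl
        simp only [hup, hsmul]
        rw [Finset.prod_update_of_mem (Finset.mem_univ j),
          Finset.prod_update_of_mem (Finset.mem_univ j), mul_assoc] }
    1 (fun b => aux_diag_norm hp' hq' hN hpNq b)

theorem diagCMM_apply (hp' : p ≠ ∞) (hq' : q ≠ ∞) (hN : 0 < N) (hpNq : p ≤ (N : ℝ≥0∞) * q)
    (b : Fin N → lp (fun _ : ℕ => 𝕜) p) (i : ℕ) :
    (diagCMM hp' hq' hN hpNq b : ∀ _ : ℕ, 𝕜) i = ∏ j, (b j : ∀ _ : ℕ, 𝕜) i := by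
  rfl

end diag

section rosenthal

variable {𝕜 X : Type*} [RCLike 𝕜] [NormedAddCommGroup X] [NormedSpace 𝕜 X]

theorem aux_norm_le_re_im (a : 𝕜) : ‖a‖ ≤ |RCLike.re a| + |RCLike.im a| := by
  conv_lhs => rw [← RCLike.re_add_im a]
  refine (norm_add_le _ _).trans ?_
  gcongr
  · simp [RCLike.norm_ofReal]
  · rw [norm_mul]
    rcases eq_or_ne (RCLike.I : 𝕜) 0 with h | h
    · simp [h, abs_nonneg]
    · rw [RCLike.norm_I_of_ne_zero h, mul_one]
      simp [RCLike.norm_ofReal]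

theorem aux_l1_lower (v : ℕ → X) (z z' : 𝕜) (ρ : ℝ) (hρ : 0 < ρ)
    (hsep : 8 * ρ ≤ ‖z - z'‖) (u : ℕ → ℕ)
    (hreal : ∀ (K : ℕ) (σ : ℕ → Bool), ∃ f : X →L[𝕜] 𝕜, ‖f‖ ≤ 1 ∧
      ∀ k, k < K → ‖f (v (u k)) - (if σ k then z else z')‖ ≤ ρ)
    (a : ℕ → 𝕜) (K : ℕ) :
    ρ * (∑ k ∈ Finset.range K, ‖a k‖) ≤ ‖∑ k ∈ Finset.range K, a k • v (u k)‖ := by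
  set S := ∑ k ∈ Finset.range K, a k • v (u k) with hS
  set w := z - z' with hw
  set A := ∑ k ∈ Finset.range K, ‖a k‖ with hA
  have hAnn : 0 ≤ A := Finset.sum_nonneg fun k _ => norm_nonneg _
  have key : ∀ σ : ℕ → Bool,
      ‖w‖ * ‖∑ k ∈ Finset.range K, (if σ k then (1:𝕜) else -1) * a k‖ - 2 * ρ * A
        ≤ 2 * ‖S‖ := by
    intro σ
    obtain ⟨f₁, hf₁n, hf₁⟩ := hreal K σ
    obtain ⟨f₂, hf₂n, hf₂⟩ := hreal K (fun k => !(σ k))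
    set g := f₁ - f₂ with hg
    have hgn : ‖g‖ ≤ 2 := by
      calc ‖f₁ - f₂‖ ≤ ‖f₁‖ + ‖f₂‖ := norm_sub_le _ _
        _ ≤ 2 := by linarith
    have hgk : ∀ k, k < K → ‖g (v (u k)) - (if σ k then (1:𝕜) else -1) * w‖ ≤ 2 * ρ := by
      intro k hk
      have h1 := hf₁ k hk
      have h2 := hf₂ k hk
      have hgv : g (v (u k)) = f₁ (v (u k)) - f₂ (v (u k)) := rfl
      cases hσ : σ k
      · simp only [hσ, Bool.not_false] at h1 h2 ⊢
        norm_num at h1 h2 ⊢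
        have : g (v (u k)) + w = (f₁ (v (u k)) - z') - (f₂ (v (u k)) - z) := by
          rw [hgv, hw]; ring
        rw [this]
        calc ‖_ - _‖ ≤ ‖f₁ (v (u k)) - z'‖ + ‖f₂ (v (u k)) - z‖ := norm_sub_le _ _
          _ ≤ 2 * ρ := by linarith
      · simp only [hσ, Bool.not_true] at h1 h2 ⊢
        norm_num at h1 h2 ⊢
        have : g (v (u k)) - w = (f₁ (v (u k)) - z) - (f₂ (v (u k)) - z') := by
          rw [hgv, hw]; ring
        rw [this]
        calc ‖_ - _‖ ≤ ‖f₁ (v (u k)) - z‖ + ‖f₂ (v (u k)) - z'‖ := norm_sub_le _ _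
          _ ≤ 2 * ρ := by linarith
    have hgS : g S = (∑ k ∈ Finset.range K, (if σ k then (1:𝕜) else -1) * a k) * w
        + ∑ k ∈ Finset.range K, a k • (g (v (u k)) - (if σ k then (1:𝕜) else -1) * w) := by
      rw [hS, map_sum]
      rw [Finset.sum_mul, ← Finset.sum_add_distrib]
      refine Finset.sum_congr rfl fun k _ => ?_
      simp only [ContinuousLinearMap.map_smul, smul_eq_mul]
      ring
    have hb1 : ‖g S‖ ≤ 2 * ‖S‖ := by
      calc ‖g S‖ ≤ ‖g‖ * ‖S‖ := g.le_opNorm S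
        _ ≤ 2 * ‖S‖ := by gcongr
    have hb2 : ‖w‖ * ‖∑ k ∈ Finset.range K, (if σ k then (1:𝕜) else -1) * a k‖ - 2 * ρ * A
        ≤ ‖g S‖ := by
      rw [hgS]
      have h3 : ‖∑ k ∈ Finset.range K, a k • (g (v (u k)) - (if σ k then (1:𝕜) else -1) * w)‖
          ≤ 2 * ρ * A := by
        calc ‖_‖ ≤ ∑ k ∈ Finset.range K, ‖a k • (g (v (u k)) - (if σ k then (1:𝕜) else -1) * w)‖ :=
              norm_sum_le _ _
          _ ≤ ∑ k ∈ Finset.range K, ‖a k‖ * (2 * ρ) := by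
              refine Finset.sum_le_sum fun k hk => ?_
              rw [norm_smul]
              exact mul_le_mul_of_nonneg_left (hgk k (Finset.mem_range.mp hk)) (norm_nonneg _)
          _ = 2 * ρ * A := by rw [← Finset.sum_mul, hA]; ring
      calc ‖w‖ * ‖∑ k ∈ Finset.range K, (if σ k then (1:𝕜) else -1) * a k‖ - 2 * ρ * A
          = ‖(∑ k ∈ Finset.range K, (if σ k then (1:𝕜) else -1) * a k) * w‖ - 2 * ρ * A := by
            rw [norm_mul, mul_comm]
        _ ≤ ‖(∑ k ∈ Finset.range K, (if σ k then (1:𝕜) else -1) * a k) * w‖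
            - ‖∑ k ∈ Finset.range K, a k • (g (v (u k)) - (if σ k then (1:𝕜) else -1) * w)‖ := by
            linarith
        _ ≤ ‖_ + _‖ := by
            rw [sub_le_iff_le_add]
            calc ‖_ * w‖ = ‖(_ * w + _) - _‖ := by rw [add_sub_cancel_right]
              _ ≤ ‖_ * w + _‖ + ‖_‖ := norm_sub_le _ _
    linarith
  -- instantiate with real/imaginary sign patterns
  have hre := key (fun k => decide (0 ≤ RCLike.re (a k)))
  have him := key (fun k => decide (0 ≤ RCLike.im (a k)))
  have hre2 : ∑ k ∈ Finset.range K, |RCLike.re (a k)|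
      ≤ ‖∑ k ∈ Finset.range K, (if decide (0 ≤ RCLike.re (a k)) then (1:𝕜) else -1) * a k‖ := by
    calc ∑ k ∈ Finset.range K, |RCLike.re (a k)|
        = RCLike.re (∑ k ∈ Finset.range K, (if decide (0 ≤ RCLike.re (a k)) then (1:𝕜) else -1) * a k) := by
          rw [map_sum]
          refine (Finset.sum_congr rfl fun k _ => ?_)
          by_cases h : 0 ≤ RCLike.re (a k)
          · simp [h, abs_of_nonneg h]
          · push_neg at h
            simp [h.not_ge, abs_of_neg h]
      _ ≤ |RCLike.re _| := le_abs_self _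
      _ ≤ ‖_‖ := RCLike.abs_re_le_norm _
  have him2 : ∑ k ∈ Finset.range K, |RCLike.im (a k)|
      ≤ ‖∑ k ∈ Finset.range K, (if decide (0 ≤ RCLike.im (a k)) then (1:𝕜) else -1) * a k‖ := by
    calc ∑ k ∈ Finset.range K, |RCLike.im (a k)|
        = RCLike.im (∑ k ∈ Finset.range K, (if decide (0 ≤ RCLike.im (a k)) then (1:𝕜) else -1) * a k) := by
          rw [map_sum]
          refine (Finset.sum_congr rfl fun k _ => ?_)
          by_cases h : 0 ≤ RCLike.im (a k)
          · simp [h, abs_of_nonneg h]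
          · push_neg at h
            simp [h.not_ge, abs_of_neg h]
      _ ≤ |RCLike.im _| := le_abs_self _
      _ ≤ ‖_‖ := RCLike.abs_im_le_norm _
  have hsum : A ≤ ∑ k ∈ Finset.range K, |RCLike.re (a k)| + ∑ k ∈ Finset.range K, |RCLike.im (a k)| := by
    rw [hA, ← Finset.sum_add_distrib]
    exact Finset.sum_le_sum fun k _ => aux_norm_le_re_im (a k)
  have hwest : 8 * ρ ≤ ‖w‖ := hsep
  have hwnn : 0 ≤ ‖w‖ := norm_nonneg _
  -- add the two instantiated inequalities
  have c1 : ‖w‖ * (∑ k ∈ Finset.range K, |RCLike.re (a k)|) - 2 * ρ * A ≤ 2 * ‖S‖ := by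
    have := mul_le_mul_of_nonneg_left hre2 hwnn
    linarith
  have c2 : ‖w‖ * (∑ k ∈ Finset.range K, |RCLike.im (a k)|) - 2 * ρ * A ≤ 2 * ‖S‖ := by
    have := mul_le_mul_of_nonneg_left him2 hwnn
    linarith
  nlinarith [norm_nonneg S]

theorem aux_exists_l1_op [CompleteSpace X] (v : ℕ → X) (C : ℝ) (hv : ∀ n, ‖v n‖ ≤ C)
    (z z' : 𝕜) (ρ : ℝ) (hρ : 0 < ρ) (hsep : 8 * ρ ≤ ‖z - z'‖) (u : ℕ → ℕ)
    (hreal : ∀ (K : ℕ) (σ : ℕ → Bool), ∃ f : X →L[𝕜] 𝕜, ‖f‖ ≤ 1 ∧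
      ∀ k, k < K → ‖f (v (u k)) - (if σ k then z else z')‖ ≤ ρ) :
    ∃ (T : lp (fun _ : ℕ => 𝕜) 1 →L[𝕜] X) (c : ℝ), 0 < c ∧ ∀ a, c * ‖a‖ ≤ ‖T a‖ := by
  have hC : 0 ≤ C := le_trans (norm_nonneg _) (hv 0)
  have hnorm1 : ∀ a : lp (fun _ : ℕ => 𝕜) 1, ‖a‖ = ∑' k, ‖(a : ∀ _ : ℕ, 𝕜) k‖ := by
    intro a
    have h := lp.norm_eq_tsum_rpow (p := 1) (by norm_num) a
    simpa using h
  have hsa : ∀ a : lp (fun _ : ℕ => 𝕜) 1, Summable fun k => ‖(a : ∀ _ : ℕ, 𝕜) k‖ := by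
    intro a
    have h := (lp.memℓp a).summable (p := 1) (by norm_num)
    simpa using h
  have hsax : ∀ a : lp (fun _ : ℕ => 𝕜) 1, Summable fun k => (a : ∀ _ : ℕ, 𝕜) k • v (u k) := by
    intro a
    refine Summable.of_norm ?_
    refine Summable.of_nonneg_of_le (fun k => norm_nonneg _) (fun k => ?_) ((hsa a).mul_right C)
    rw [norm_smul]
    exact mul_le_mul_of_nonneg_left (hv (u k)) (norm_nonneg _)
  set L : lp (fun _ : ℕ => 𝕜) 1 →ₗ[𝕜] X :=
    { toFun := fun a => ∑' k, (a : ∀ _ : ℕ, 𝕜) k • v (u k)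
      map_add' := by
        intro a b
        have hcoe : ∀ k, ((a + b : lp (fun _ : ℕ => 𝕜) 1) : ∀ _ : ℕ, 𝕜) k • v (u k)
            = (a : ∀ _ : ℕ, 𝕜) k • v (u k) + (b : ∀ _ : ℕ, 𝕜) k • v (u k) := by
          intro k
          rw [lp.coeFn_add, Pi.add_apply, add_smul]
        show (∑' k, ((a + b : lp (fun _ : ℕ => 𝕜) 1) : ∀ _ : ℕ, 𝕜) k • v (u k)) = _
        rw [tsum_congr hcoe]
        exact Summable.tsum_add (hsax a) (hsax b)
      map_smul' := by
        intro c a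
        have hcoe : ∀ k, ((c • a : lp (fun _ : ℕ => 𝕜) 1) : ∀ _ : ℕ, 𝕜) k • v (u k)
            = c • ((a : ∀ _ : ℕ, 𝕜) k • v (u k)) := by
          intro k
          rw [lp.coeFn_smul, Pi.smul_apply, smul_smul, smul_eq_mul]
        show (∑' k, ((c • a : lp (fun _ : ℕ => 𝕜) 1) : ∀ _ : ℕ, 𝕜) k • v (u k)) = _
        rw [tsum_congr hcoe]
        simp only [RingHom.id_apply]
        exact ((hsax a).hasSum.const_smul c).tsum_eq }
    with hL
  have hLbound : ∀ a, ‖L a‖ ≤ C * ‖a‖ := by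
    intro a
    have h1 : ‖L a‖ ≤ ∑' k, ‖(a : ∀ _ : ℕ, 𝕜) k • v (u k)‖ := norm_tsum_le_tsum_norm
      (by
        refine Summable.of_nonneg_of_le (fun k => norm_nonneg _) (fun k => ?_) ((hsa a).mul_right C)
        rw [norm_smul]
        exact mul_le_mul_of_nonneg_left (hv (u k)) (norm_nonneg _))
    refine h1.trans ?_
    calc (∑' k, ‖(a : ∀ _ : ℕ, 𝕜) k • v (u k)‖) ≤ ∑' k, ‖(a : ∀ _ : ℕ, 𝕜) k‖ * C := by
          refine Summable.tsum_le_tsum (fun k => ?_) (by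
            refine Summable.of_nonneg_of_le (fun k => norm_nonneg _) (fun k => ?_) ((hsa a).mul_right C)
            rw [norm_smul]
            exact mul_le_mul_of_nonneg_left (hv (u k)) (norm_nonneg _)) ((hsa a).mul_right C)
          rw [norm_smul]
          exact mul_le_mul_of_nonneg_left (hv (u k)) (norm_nonneg _)
      _ = C * ‖a‖ := by rw [tsum_mul_right, hnorm1 a, mul_comm]
  set T : lp (fun _ : ℕ => 𝕜) 1 →L[𝕜] X := L.mkContinuous C hLbound with hT
  refine ⟨T, ρ, hρ, ?_⟩
  intro a
  have hTa : T a = ∑' k, (a : ∀ _ : ℕ, 𝕜) k • v (u k) := rfl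
  have hten : Filter.Tendsto (fun K => ∑ k ∈ Finset.range K, (a : ∀ _ : ℕ, 𝕜) k • v (u k))
      Filter.atTop (nhds (T a)) := by
    rw [hTa]
    exact (hsax a).hasSum.tendsto_sum_nat
  have htennorm : Filter.Tendsto (fun K => ‖∑ k ∈ Finset.range K, (a : ∀ _ : ℕ, 𝕜) k • v (u k)‖)
      Filter.atTop (nhds ‖T a‖) := hten.norm
  have htenlhs : Filter.Tendsto (fun K => ρ * ∑ k ∈ Finset.range K, ‖(a : ∀ _ : ℕ, 𝕜) k‖)
      Filter.atTop (nhds (ρ * ‖a‖)) := by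
    rw [hnorm1 a]
    exact ((hsa a).hasSum.tendsto_sum_nat).const_mul ρ
  refine le_of_tendsto_of_tendsto' htenlhs htennorm (fun K => ?_)
  exact aux_l1_lower v z z' ρ hρ hsep u hreal _ K

def SplitsP (v : ℕ → X) (z z' : 𝕜) (ρ : ℝ) (f : X →L[𝕜] 𝕜) (M : Set ℕ) : Prop :=
  {n ∈ M | ‖f (v n) - z‖ ≤ ρ}.Infinite ∧ {n ∈ M | ‖f (v n) - z'‖ ≤ ρ}.Infinite

theorem SplitsP.mono {v : ℕ → X} {z z' : 𝕜} {ρ : ℝ} {f : X →L[𝕜] 𝕜} {M M' : Set ℕ}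
    (h : SplitsP v z z' ρ f M) (hMM : M ⊆ M') : SplitsP v z z' ρ f M' :=
  ⟨h.1.mono (fun n hn => ⟨hMM hn.1, hn.2⟩), h.2.mono (fun n hn => ⟨hMM hn.1, hn.2⟩)⟩

def GoodP (v : ℕ → X) (z z' : 𝕜) (ρ : ℝ) (u : ℕ → ℕ) (K : ℕ) (M : Set ℕ) : Prop :=
  ∀ (σ : ℕ → Bool) (M' : Set ℕ), M' ⊆ M → M'.Infinite →
    ∃ f : X →L[𝕜] 𝕜, ‖f‖ ≤ 1 ∧ (∀ k, k < K → ‖f (v (u k)) - (if σ k then z else z')‖ ≤ ρ) ∧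
      SplitsP v z z' ρ f M'

theorem aux_claim2 (v : ℕ → X) (z z' : 𝕜) (ρ : ℝ) (u : ℕ → ℕ) (K : ℕ) (M : Set ℕ)
    (hM : M.Infinite) (hG : GoodP v z z' ρ u K M) :
    ∃ n M', M' ⊆ M ∧ M'.Infinite ∧ GoodP v z z' ρ (Function.update u K n) (K + 1) M' := by
  by_contra hno
  push_neg at hno
  -- single-kill step
  have step : ∀ Q : Set ℕ, Q ⊆ M → Q.Infinite →
      ∃ (m : ℕ) (σ' : ℕ → Bool) (Q' : Set ℕ), m ∈ Q ∧ Q' ⊆ Q ∧ Q'.Infinite ∧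
        (∀ x ∈ Q', m < x) ∧
        (∀ f : X →L[𝕜] 𝕜, ‖f‖ ≤ 1 →
          (∀ k, k < K + 1 → ‖f (v (Function.update u K m k)) - (if σ' k then z else z')‖ ≤ ρ) →
          ¬ SplitsP v z z' ρ f Q') := by
    intro Q hQM hQinf
    obtain ⟨m, hm⟩ := hQinf.nonempty
    have hQ1 : ({x ∈ Q | m < x}).Infinite := by
      have he : {x ∈ Q | m < x} = Q \ Set.Iic m := by
        ext x
        exact ⟨fun h => ⟨h.1, not_le.mpr h.2⟩, fun h => ⟨h.1, not_le.mp h.2⟩⟩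
      rw [he]
      exact hQinf.diff (Set.finite_Iic m)
    have hng := hno m {x ∈ Q | m < x} (fun x hx => hQM hx.1) hQ1
    unfold GoodP at hng
    push_neg at hng
    obtain ⟨σ', M'', hsub'', hinf'', hkill⟩ := hng
    refine ⟨m, σ', M'', hm, fun x hx => (hsub'' hx).1, hinf'', fun x hx => (hsub'' hx).2, ?_⟩
    intro f hf1 hfreal hfsplit
    exact (hkill f hf1 hfreal) hfsplit
  choose ms σs Qs hmem hsub hinf hgt hkill using step
  -- the nested chain of reservoirs
  let chain : ℕ → {Q : Set ℕ // Q ⊆ M ∧ Q.Infinite} := fun j =>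
    Nat.rec ⟨M, subset_rfl, hM⟩
      (fun _ t => ⟨Qs t.1 t.2.1 t.2.2, (hsub t.1 t.2.1 t.2.2).trans t.2.1,
        hinf t.1 t.2.1 t.2.2⟩) j
  set mj : ℕ → ℕ := fun j => ms (chain j).1 (chain j).2.1 (chain j).2.2 with hmj
  set σj : ℕ → (ℕ → Bool) := fun j => σs (chain j).1 (chain j).2.1 (chain j).2.2 with hσj
  have hchain_succ : ∀ j, (chain (j + 1)).1 = Qs (chain j).1 (chain j).2.1 (chain j).2.2 :=
    fun j => rfl
  have hmemj : ∀ j, mj j ∈ (chain j).1 := fun j => hmem _ _ _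
  have hsubj : ∀ j, (chain (j + 1)).1 ⊆ (chain j).1 := fun j => hsub _ _ _
  have hgtj : ∀ j, ∀ x ∈ (chain (j + 1)).1, mj j < x := fun j => hgt _ _ _
  have hkillj : ∀ j, ∀ f : X →L[𝕜] 𝕜, ‖f‖ ≤ 1 →
      (∀ k, k < K + 1 →
        ‖f (v (Function.update u K (mj j) k)) - (if σj j k then z else z')‖ ≤ ρ) →
      ¬ SplitsP v z z' ρ f (chain (j + 1)).1 := fun j => hkill _ _ _
  have hnested : ∀ i j, i ≤ j → (chain j).1 ⊆ (chain i).1 := by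
    intro i j hij
    induction j, hij using Nat.le_induction with
    | base => exact subset_rfl
    | succ j hij ih => exact (hsubj j).trans ih
  have hmjmono : StrictMono mj := by
    refine strictMono_nat_of_lt_succ (fun j => ?_)
    exact hgtj j _ (hmemj (j + 1))
  -- pigeonhole on the killed pattern restricted to the first K+1 bits
  obtain ⟨τ, hτ⟩ := Finite.exists_infinite_fiber (fun j => fun k : Fin (K + 1) => σj j k.1)
  set J : Set ℕ := (fun j => fun k : Fin (K + 1) => σj j k.1) ⁻¹' {τ} with hJ
  have hJinf : J.Infinite := Set.infinite_coe_iff.mp hτ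
  set σstar : ℕ → Bool := fun k => if h : k < K + 1 then τ ⟨k, h⟩ else true with hσstar
  have hagree : ∀ j ∈ J, ∀ k, k < K + 1 → σj j k = σstar k := by
    intro j hj k hk
    have h1 : (fun k : Fin (K + 1) => σj j k.1) = τ := hj
    have h2 : σj j k = τ ⟨k, hk⟩ := by rw [← h1]
    rw [h2, hσstar]
    simp [hk]
  set D : Set ℕ := mj '' J with hD
  have hDinf : D.Infinite := hJinf.image (hmjmono.injective.injOn)
  have hDM : D ⊆ M := by
    rintro n ⟨j, _, rfl⟩
    exact (chain j).2.1 (hmemj j)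
  obtain ⟨f, hf1, hfreal, hfsplit⟩ := hG σstar D hDM hDinf
  -- infinitely many elements of D located at the σstar K side
  have hinfloc : {n ∈ D | ‖f (v n) - (if σstar K then z else z')‖ ≤ ρ}.Infinite := by
    by_cases hεK : σstar K = true
    · simp only [hεK, if_true]
      exact hfsplit.1
    · simp only [Bool.not_eq_true] at hεK
      simp only [hεK]
      exact hfsplit.2
  obtain ⟨n₀, hn₀D, hn₀loc⟩ := hinfloc.nonempty
  obtain ⟨j, hjJ, hjn₀⟩ := hn₀D
  -- f splits the tail reservoir, contradicting the kill at step j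
  have hEfin : (mj '' (J ∩ Set.Iic j)).Finite := ((Set.finite_Iic j).inter_of_right J).image mj
  have htail : ∀ n ∈ D, n ∉ mj '' (J ∩ Set.Iic j) → n ∈ (chain (j + 1)).1 := by
    rintro n ⟨i, hiJ, rfl⟩ hnot
    have hij : ¬ i ≤ j := fun h => hnot ⟨i, ⟨hiJ, h⟩, rfl⟩
    push_neg at hij
    exact hnested (j + 1) i hij (hmemj i)
  have hsplitchain : SplitsP v z z' ρ f (chain (j + 1)).1 := by
    constructor
    · refine (hfsplit.1.diff hEfin).mono ?_
      rintro n ⟨⟨hnD, hnloc⟩, hnot⟩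
      exact ⟨htail n hnD hnot, hnloc⟩
    · refine (hfsplit.2.diff hEfin).mono ?_
      rintro n ⟨⟨hnD, hnloc⟩, hnot⟩
      exact ⟨htail n hnD hnot, hnloc⟩
  refine hkillj j f hf1 ?_ hsplitchain
  intro k hk
  rcases Nat.lt_succ_iff_lt_or_eq.mp hk with hkK | hkK
  · rw [Function.update_of_ne (Nat.ne_of_lt hkK), hagree j hjJ k hk]
    exact hfreal k hkK
  · subst hkK
    rw [Function.update_self, hagree j hjJ k (Nat.lt_succ_self k), hjn₀]
    exact hn₀loc

theorem aux_caseA (v : ℕ → X) (z z' : 𝕜) (ρ : ℝ) (M₀ : Set ℕ) (hM₀ : M₀.Infinite)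
    (hOsc : ∀ M : Set ℕ, M ⊆ M₀ → M.Infinite →
      ∃ f : X →L[𝕜] 𝕜, ‖f‖ ≤ 1 ∧ SplitsP v z z' ρ f M) :
    ∃ u : ℕ → ℕ, ∀ (K : ℕ) (σ : ℕ → Bool), ∃ f : X →L[𝕜] 𝕜, ‖f‖ ≤ 1 ∧
      ∀ k, k < K → ‖f (v (u k)) - (if σ k then z else z')‖ ≤ ρ := by
  have step : ∀ (K : ℕ) (u : ℕ → ℕ) (M : Set ℕ), GoodP v z z' ρ u K M → M ⊆ M₀ → M.Infinite →
      ∃ (n : ℕ) (M' : Set ℕ), M' ⊆ M₀ ∧ M'.Infinite ∧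
        GoodP v z z' ρ (Function.update u K n) (K + 1) M' := by
    intro K u M hG hMM₀ hM
    obtain ⟨n, M', hsub, hinf, hgood⟩ := aux_claim2 v z z' ρ u K M hM hG
    exact ⟨n, M', hsub.trans hMM₀, hinf, hgood⟩
  choose nsel Msel hsel1 hsel2 hsel3 using step
  have hbase : GoodP v z z' ρ (fun _ => 0) 0 M₀ := by
    intro σ M' hsub hinf
    obtain ⟨f, hf1, hfs⟩ := hOsc M' hsub hinf
    exact ⟨f, hf1, fun k hk => absurd hk (Nat.not_lt_zero k), hfs⟩
  let chain : ∀ K : ℕ, {t : (ℕ → ℕ) × Set ℕ // GoodP v z z' ρ t.1 K t.2 ∧ t.2 ⊆ M₀ ∧ t.2.Infinite} :=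
    fun K => Nat.rec ⟨((fun _ => 0), M₀), hbase, subset_rfl, hM₀⟩
      (fun K t => ⟨(Function.update t.1.1 K (nsel K t.1.1 t.1.2 t.2.1 t.2.2.1 t.2.2.2),
          Msel K t.1.1 t.1.2 t.2.1 t.2.2.1 t.2.2.2),
        hsel3 K t.1.1 t.1.2 t.2.1 t.2.2.1 t.2.2.2,
        hsel1 K t.1.1 t.1.2 t.2.1 t.2.2.1 t.2.2.2,
        hsel2 K t.1.1 t.1.2 t.2.1 t.2.2.1 t.2.2.2⟩) K
  have hchain_succ : ∀ K, (chain (K + 1)).1.1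
      = Function.update (chain K).1.1 K (nsel K (chain K).1.1 (chain K).1.2
          (chain K).2.1 (chain K).2.2.1 (chain K).2.2.2) := fun K => rfl
  set U : ℕ → ℕ := fun k => (chain (k + 1)).1.1 k with hU
  have hagree : ∀ K k, k < K → (chain K).1.1 k = U k := by
    intro K
    induction K with
    | zero => intro k hk; exact absurd hk (Nat.not_lt_zero k)
    | succ K ih =>
      intro k hk
      rcases Nat.lt_succ_iff_lt_or_eq.mp hk with hkK | hkK
      · rw [hchain_succ K, Function.update_of_ne (Nat.ne_of_lt hkK)]
        exact ih k hkK
      · subst hkK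
        rfl
  refine ⟨U, fun K σ => ?_⟩
  obtain ⟨f, hf1, hfreal, _⟩ := (chain K).2.1 σ (chain K).1.2 subset_rfl (chain K).2.2.2
  refine ⟨f, hf1, fun k hk => ?_⟩
  rw [← hagree K k hk]
  exact hfreal k hk

theorem aux_rat_approx (L : 𝕜) (δ : ℝ) (hδ : 0 < δ) :
    ∃ a b : ℚ, ‖L - (((a : ℝ) : 𝕜) + ((b : ℝ) : 𝕜) * RCLike.I)‖ ≤ δ := by
  obtain ⟨a, ha⟩ := exists_rat_near (RCLike.re L) (show 0 < δ/2 by positivity)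
  obtain ⟨b, hb⟩ := exists_rat_near (RCLike.im L) (show 0 < δ/2 by positivity)
  refine ⟨a, b, ?_⟩
  have hrep : L - (((a : ℝ) : 𝕜) + ((b : ℝ) : 𝕜) * RCLike.I)
      = ((RCLike.re L - a : ℝ) : 𝕜) + ((RCLike.im L - b : ℝ) : 𝕜) * RCLike.I := by
    conv_lhs => rw [← RCLike.re_add_im L]
    push_cast
    ring
  rw [hrep]
  have hI : ‖(RCLike.I : 𝕜)‖ ≤ 1 := by
    rcases eq_or_ne (RCLike.I : 𝕜) 0 with h | h
    · simp [h]
    · rw [RCLike.norm_I_of_ne_zero h]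
  calc ‖_ + _‖ ≤ ‖((RCLike.re L - a : ℝ) : 𝕜)‖ + ‖((RCLike.im L - b : ℝ) : 𝕜) * RCLike.I‖ :=
        norm_add_le _ _
    _ ≤ |RCLike.re L - a| + |RCLike.im L - b| * 1 := by
        gcongr
        · rw [RCLike.norm_ofReal]
        · rw [norm_mul]
          gcongr
          · rw [RCLike.norm_ofReal]
    _ ≤ δ/2 + δ/2 := by rw [mul_one]; exact add_le_add ha.le hb.le
    _ = δ := by ring

theorem aux_weak_cauchy_subseq [CompleteSpace X] (v : ℕ → X) (C : ℝ) (hv : ∀ n, ‖v n‖ ≤ C)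
    (hB : ∀ (z z' : 𝕜) (ρ : ℝ), 0 < ρ → 8 * ρ ≤ ‖z - z'‖ → ∀ M₀ : Set ℕ, M₀.Infinite →
      ∃ M, M ⊆ M₀ ∧ M.Infinite ∧ ∀ f : X →L[𝕜] 𝕜, ‖f‖ ≤ 1 → ¬ SplitsP v z z' ρ f M) :
    ∃ φ : ℕ → ℕ, StrictMono φ ∧ ∀ f : X →L[𝕜] 𝕜, CauchySeq fun k => f (v (φ k)) := by
  classical
  obtain ⟨en, hen⟩ : ∃ e : ℕ → ℚ × ℚ × ℚ × ℚ × ℚ, Function.Surjective e :=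
    ⟨(Denumerable.eqv (ℚ × ℚ × ℚ × ℚ × ℚ)).symm, Equiv.surjective _⟩
  set pz : ℕ → 𝕜 := fun i => (((en i).1 : ℝ) : 𝕜) + (((en i).2.1 : ℝ) : 𝕜) * RCLike.I with hpzd
  set pz' : ℕ → 𝕜 := fun i =>
    (((en i).2.2.1 : ℝ) : 𝕜) + (((en i).2.2.2.1 : ℝ) : 𝕜) * RCLike.I with hpz'd
  set pρ : ℕ → ℝ := fun i => ((en i).2.2.2.2 : ℝ) with hpρd
  have hsel : ∀ (i : ℕ) (M₀ : Set ℕ), M₀.Infinite → ∃ M, M ⊆ M₀ ∧ M.Infinite ∧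
      (0 < pρ i → 8 * pρ i ≤ ‖pz i - pz' i‖ →
        ∀ f : X →L[𝕜] 𝕜, ‖f‖ ≤ 1 → ¬ SplitsP v (pz i) (pz' i) (pρ i) f M) := by
    intro i M₀ hM₀
    by_cases hval : 0 < pρ i ∧ 8 * pρ i ≤ ‖pz i - pz' i‖
    · obtain ⟨M, h1, h2, h3⟩ := hB (pz i) (pz' i) (pρ i) hval.1 hval.2 M₀ hM₀
      exact ⟨M, h1, h2, fun _ _ => h3⟩
    · exact ⟨M₀, subset_rfl, hM₀, fun h1 h2 => absurd ⟨h1, h2⟩ hval⟩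
  choose Msel hMsub hMinf hMbad using hsel
  let chain : ℕ → {M : Set ℕ // M.Infinite} := fun i =>
    Nat.rec ⟨Set.univ, Set.infinite_univ⟩ (fun i t => ⟨Msel i t.1 t.2, hMinf i t.1 t.2⟩) i
  have hchainsub : ∀ i, (chain (i + 1)).1 ⊆ (chain i).1 := fun i => hMsub i _ _
  have hnested : ∀ i j, i ≤ j → (chain j).1 ⊆ (chain i).1 := by
    intro i j hij
    induction j, hij using Nat.le_induction with
    | base => exact subset_rfl
    | succ j hij ih => exact (hchainsub j).trans ih
  have hbad : ∀ i, 0 < pρ i → 8 * pρ i ≤ ‖pz i - pz' i‖ →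
      ∀ f : X →L[𝕜] 𝕜, ‖f‖ ≤ 1 → ¬ SplitsP v (pz i) (pz' i) (pρ i) f (chain (i + 1)).1 :=
    fun i => hMbad i _ _
  -- diagonal sequence
  have hgtsel : ∀ (j a : ℕ), ∃ b, b ∈ (chain j).1 ∧ a < b := by
    intro j a
    obtain ⟨b, hb, hab⟩ := (chain j).2.exists_gt a
    exact ⟨b, hb, hab⟩
  choose g hg1 hg2 using hgtsel
  let ψ : ℕ → ℕ := fun j => Nat.rec (g 0 0) (fun j x => g (j + 1) x) j
  have hψmem : ∀ j, ψ j ∈ (chain j).1 := by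
    intro j
    cases j with
    | zero => exact hg1 0 0
    | succ j => exact hg1 (j + 1) _
  have hψmono : StrictMono ψ := strictMono_nat_of_lt_succ (fun j => hg2 (j + 1) (ψ j))
  refine ⟨ψ, hψmono, ?_⟩
  intro f
  by_contra hnc
  have hf0 : f ≠ 0 := by
    rintro rfl
    exact hnc (by simpa using cauchySeq_const (0 : 𝕜))
  set f₁ : X →L[𝕜] 𝕜 := ((‖f‖⁻¹ : ℝ) : 𝕜) • f with hf₁d
  have hfn0 : ‖f‖ ≠ 0 := norm_ne_zero_iff.mpr hf0
  have hf₁ : ‖f₁‖ ≤ 1 := by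
    rw [hf₁d]
    refine le_trans (ContinuousLinearMap.opNorm_smul_le _ _) ?_
    rw [RCLike.norm_ofReal, abs_inv, abs_norm, inv_mul_cancel₀ hfn0]
  have hnc₁ : ¬ CauchySeq fun k => f₁ (v (ψ k)) := by
    intro hc
    apply hnc
    obtain ⟨l, hl⟩ := cauchySeq_tendsto_of_complete hc
    have hrep : (fun k => f (v (ψ k))) = fun k => ((‖f‖ : ℝ) : 𝕜) * f₁ (v (ψ k)) := by
      funext k
      rw [hf₁d]
      simp only [ContinuousLinearMap.coe_smul', Pi.smul_apply, smul_eq_mul]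
      rw [← mul_assoc, ← RCLike.ofReal_mul, mul_inv_cancel₀ hfn0]
      simp
    rw [hrep]
    exact ((hl.const_mul (((‖f‖ : ℝ) : 𝕜))).cauchySeq)
  set w : ℕ → 𝕜 := fun k => f₁ (v (ψ k)) with hwd
  have hwb : ∀ k, w k ∈ Metric.closedBall (0 : 𝕜) C := by
    intro k
    rw [Metric.mem_closedBall, dist_zero_right]
    calc ‖w k‖ ≤ ‖f₁‖ * ‖v (ψ k)‖ := f₁.le_opNorm _
      _ ≤ 1 * C := by
          refine mul_le_mul hf₁ (hv _) (norm_nonneg _) zero_le_one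
      _ = C := one_mul C
  rw [Metric.cauchySeq_iff] at hnc₁
  push_neg at hnc₁
  obtain ⟨ε, hε, hosc⟩ := hnc₁
  choose mm hmm nn hnn hd using hosc
  obtain ⟨L, _, θ₁, hθ₁, hL⟩ := tendsto_subseq_of_bounded Metric.isBounded_closedBall
    (fun N => hwb (mm N))
  obtain ⟨L', _, θ₂, hθ₂, hL'⟩ := tendsto_subseq_of_bounded Metric.isBounded_closedBall
    (fun N => hwb (nn (θ₁ N)))
  set θ : ℕ → ℕ := θ₁ ∘ θ₂ with hθd
  have hLcv : Filter.Tendsto (fun N => w (mm (θ N))) Filter.atTop (nhds L) :=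
    hL.comp hθ₂.tendsto_atTop
  have hL'cv : Filter.Tendsto (fun N => w (nn (θ N))) Filter.atTop (nhds L') := hL'
  have hsepLL' : ε ≤ dist L L' := by
    refine ge_of_tendsto (hLcv.dist hL'cv) ?_
    filter_upwards with N
    exact hd (θ N)
  obtain ⟨ρq, hρq0, hρqlt⟩ := exists_rat_btwn (show (0:ℝ) < ε/16 by positivity)
  set ρ : ℝ := (ρq : ℝ) with hρd
  have hρpos : 0 < ρ := hρq0
  obtain ⟨a1, b1, hzapp⟩ := aux_rat_approx (𝕜 := 𝕜) L (ρ/2) (by positivity)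
  obtain ⟨a2, b2, hz'app⟩ := aux_rat_approx (𝕜 := 𝕜) L' (ρ/2) (by positivity)
  obtain ⟨i, hi⟩ := hen (a1, b1, a2, b2, ρq)
  have hpzi : pz i = (((a1 : ℝ)) : 𝕜) + (((b1 : ℝ)) : 𝕜) * RCLike.I := by
    simp only [hpzd, hi]
  have hpz'i : pz' i = (((a2 : ℝ)) : 𝕜) + (((b2 : ℝ)) : 𝕜) * RCLike.I := by
    simp only [hpz'd, hi]
  have hpρi : pρ i = ρ := by simp only [hpρd, hi, hρd]
  have happrox1 : ‖L - pz i‖ ≤ ρ/2 := by rw [hpzi]; exact hzapp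
  have happrox2 : ‖L' - pz' i‖ ≤ ρ/2 := by rw [hpz'i]; exact hz'app
  have hsepzz' : 8 * pρ i ≤ ‖pz i - pz' i‖ := by
    rw [hpρi]
    have htri : dist L L' ≤ ‖L - pz i‖ + ‖pz i - pz' i‖ + ‖pz' i - L'‖ := by
      rw [dist_eq_norm]
      calc ‖L - L'‖ = ‖(L - pz i) + (pz i - pz' i) + (pz' i - L')‖ := by ring_nf
        _ ≤ _ := norm_add₃_le
    have h2 : ‖pz' i - L'‖ = ‖L' - pz' i‖ := norm_sub_rev _ _
    have hρε : 16 * ρ ≤ ε := by linarith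
    linarith
  refine hbad i (hpρi ▸ hρpos) hsepzz' f₁ hf₁ ⟨?_, ?_⟩
  · -- infinitely many located near pz i
    apply Set.infinite_of_forall_exists_gt
    intro a
    obtain ⟨N₀, hN₀⟩ := Metric.tendsto_atTop.mp hLcv (ρ/2) (by positivity)
    set N := max N₀ (max (a + 1) (i + 1)) with hN
    refine ⟨ψ (mm (θ N)), ⟨?_, ?_⟩, ?_⟩
    · -- membership in chain (i+1)
      have h1 : i + 1 ≤ N := le_trans (le_max_right _ _) (le_max_right _ _)
      have h2 : N ≤ mm (θ N) := le_trans (hθ₁.comp hθ₂).le_apply (hmm (θ N))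
      exact hnested (i + 1) (mm (θ N)) (le_trans h1 h2) (hψmem (mm (θ N)))
    · -- location
      show ‖f₁ (v (ψ (mm (θ N)))) - pz i‖ ≤ pρ i
      rw [hpρi]
      have hd1 : dist (w (mm (θ N))) L < ρ/2 := hN₀ N (le_max_left _ _)
      calc ‖w (mm (θ N)) - pz i‖ = ‖(w (mm (θ N)) - L) + (L - pz i)‖ := by ring_nf
        _ ≤ ‖w (mm (θ N)) - L‖ + ‖L - pz i‖ := norm_add_le _ _
        _ ≤ ρ/2 + ρ/2 := by
            have hw1 : ‖w (mm (θ N)) - L‖ ≤ ρ/2 := by rw [← dist_eq_norm]; exact hd1.le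
            exact add_le_add hw1 happrox1
        _ = ρ := by ring
    · -- strictly bigger than a
      have h2 : N ≤ mm (θ N) := le_trans (hθ₁.comp hθ₂).le_apply (hmm (θ N))
      have h3 : a + 1 ≤ N := le_trans (le_max_left _ _) (le_max_right _ _)
      calc a < a + 1 := Nat.lt_succ_self a
        _ ≤ N := h3
        _ ≤ mm (θ N) := h2
        _ ≤ ψ (mm (θ N)) := hψmono.le_apply
  · -- infinitely many located near pz' i
    apply Set.infinite_of_forall_exists_gt
    intro a
    obtain ⟨N₀, hN₀⟩ := Metric.tendsto_atTop.mp hL'cv (ρ/2) (by positivity)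
    set N := max N₀ (max (a + 1) (i + 1)) with hN
    refine ⟨ψ (nn (θ N)), ⟨?_, ?_⟩, ?_⟩
    · have h1 : i + 1 ≤ N := le_trans (le_max_right _ _) (le_max_right _ _)
      have h2 : N ≤ nn (θ N) := le_trans (hθ₁.comp hθ₂).le_apply (hnn (θ N))
      exact hnested (i + 1) (nn (θ N)) (le_trans h1 h2) (hψmem (nn (θ N)))
    · show ‖f₁ (v (ψ (nn (θ N)))) - pz' i‖ ≤ pρ i
      rw [hpρi]
      have hd1 : dist (w (nn (θ N))) L' < ρ/2 := hN₀ N (le_max_left _ _)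
      calc ‖w (nn (θ N)) - pz' i‖ = ‖(w (nn (θ N)) - L') + (L' - pz' i)‖ := by ring_nf
        _ ≤ ‖w (nn (θ N)) - L'‖ + ‖L' - pz' i‖ := norm_add_le _ _
        _ ≤ ρ/2 + ρ/2 := by
            have hw1 : ‖w (nn (θ N)) - L'‖ ≤ ρ/2 := by rw [← dist_eq_norm]; exact hd1.le
            exact add_le_add hw1 happrox2
        _ = ρ := by ring
    · have h2 : N ≤ nn (θ N) := le_trans (hθ₁.comp hθ₂).le_apply (hnn (θ N))
      have h3 : a + 1 ≤ N := le_trans (le_max_left _ _) (le_max_right _ _)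
      calc a < a + 1 := Nat.lt_succ_self a
        _ ≤ N := h3
        _ ≤ nn (θ N) := h2
        _ ≤ ψ (nn (θ N)) := hψmono.le_apply

theorem aux_rosenthal [CompleteSpace X] (v : ℕ → X) (C : ℝ) (hv : ∀ n, ‖v n‖ ≤ C)
    (hnol1 : ¬ ∃ (T : lp (fun _ : ℕ => 𝕜) 1 →L[𝕜] X) (c : ℝ), 0 < c ∧ ∀ a, c * ‖a‖ ≤ ‖T a‖) :
    ∃ φ : ℕ → ℕ, StrictMono φ ∧ ∀ f : X →L[𝕜] 𝕜, CauchySeq fun k => f (v (φ k)) := by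
  by_cases hA : ∃ (z z' : 𝕜) (ρ : ℝ), 0 < ρ ∧ 8 * ρ ≤ ‖z - z'‖ ∧ ∃ M₀ : Set ℕ, M₀.Infinite ∧
      ∀ M : Set ℕ, M ⊆ M₀ → M.Infinite → ∃ f : X →L[𝕜] 𝕜, ‖f‖ ≤ 1 ∧ SplitsP v z z' ρ f M
  · exfalso
    obtain ⟨z, z', ρ, hρ, hsep, M₀, hM₀, hOsc⟩ := hA
    obtain ⟨u, hu⟩ := aux_caseA v z z' ρ M₀ hM₀ hOsc
    refine hnol1 (aux_exists_l1_op v C hv z z' ρ hρ hsep u ?_)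
    intro K σ
    obtain ⟨f, hf1, hf2⟩ := hu K σ
    exact ⟨f, hf1, hf2⟩
  · push_neg at hA
    refine aux_weak_cauchy_subseq v C hv ?_
    intro z z' ρ hρ hsep M₀ hM₀
    obtain ⟨M, hsub, hinf, hbadf⟩ := hA z z' ρ hρ hsep M₀ hM₀
    refine ⟨M, hsub, hinf, ?_⟩
    intro f hf1 hsplit
    exact (hbadf f hf1) hsplit

end rosenthal


/-- Let `X, Y` be Banach spaces, `N ∈ ℕ` and `1 < p, q < ∞` with `Nq ≥ p`.
If `X` contains no subspace isomorphic to `ℓ₁` (no bounded-below operator `ℓ₁ → X`), there is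
a bounded surjective operator from `X` onto `ℓ_p`, and there is an isomorphic embedding of
`ℓ_q` into `Y` (a bounded-below operator `ℓ_q → Y`), then there exists a continuous
`N`-homogeneous polynomial from `X` to `Y` (the diagonal of a continuous `N`-linear map)
which is not weakly sequentially continuous. -/
theorem stmt_17 {𝕜 X Y : Type*} [RCLike 𝕜] [NormedAddCommGroup X] [NormedSpace 𝕜 X]
    [CompleteSpace X] [NormedAddCommGroup Y] [NormedSpace 𝕜 Y] [CompleteSpace Y]
    (N : ℕ) (p q : ℝ≥0∞) [Fact (1 ≤ p)] [Fact (1 ≤ q)]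
    (hp : 1 < p) (hp' : p ≠ ∞) (hq : 1 < q) (hq' : q ≠ ∞) (hNqp : p ≤ (N : ℝ≥0∞) * q)
    (hnol1 : ¬ ∃ (T : lp (fun _ : ℕ => 𝕜) 1 →L[𝕜] X) (c : ℝ), 0 < c ∧
      ∀ z, c * ‖z‖ ≤ ‖T z‖)
    (hquot : ∃ π : X →L[𝕜] lp (fun _ : ℕ => 𝕜) p, Function.Surjective π)
    (hembed : ∃ (J : lp (fun _ : ℕ => 𝕜) q →L[𝕜] Y) (c : ℝ), 0 < c ∧
      ∀ z, c * ‖z‖ ≤ ‖J z‖) :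
    ∃ A : ContinuousMultilinearMap 𝕜 (fun _ : Fin N => X) Y,
      ¬ ∀ (u : ℕ → X) (x : X),
        (∀ f : X →L[𝕜] 𝕜, Tendsto (fun n => f (u n)) atTop (nhds (f x))) →
        Tendsto (fun n => A (fun _ => u n)) atTop (nhds (A (fun _ => x))) := by
  classical
  have hN : 0 < N := by
    rcases Nat.eq_zero_or_pos N with h | h
    · exfalso
      subst h
      rw [Nat.cast_zero, zero_mul] at hNqp
      have hp0 : p = 0 := le_antisymm hNqp (zero_le : (0:ℝ≥0∞) ≤ p)
      rw [hp0] at hp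
      exact (not_lt_of_ge (zero_le : (0:ℝ≥0∞) ≤ 1)) hp
    · exact h
  have hNe : Nonempty (Fin N) := ⟨⟨0, hN⟩⟩
  have hp0 : 0 < p.toReal := by
    rw [ENNReal.toReal_pos_iff]
    exact ⟨lt_of_lt_of_le one_pos (Fact.out (p := 1 ≤ p)), hp'.lt_top⟩
  obtain ⟨π, hπ⟩ := hquot
  obtain ⟨J, cJ, hcJ, hJ⟩ := hembed
  obtain ⟨Cb, hCb, hCbound⟩ := π.exists_preimage_norm_le hπ
  set e : ℕ → lp (fun _ : ℕ => 𝕜) p := fun n => lp.single p n 1 with he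
  have hen : ∀ n, ‖e n‖ ≤ 1 := by
    intro n
    have h := lp.norm_single (E := fun _ : ℕ => 𝕜) (p := p) (ENNReal.toReal_pos_iff.mp hp0).1 n (1:𝕜)
    simp only [norm_one] at h
    simpa [he] using le_of_eq h
  choose x hx hxb using fun n => hCbound (e n)
  have hxbound : ∀ n, ‖x n‖ ≤ Cb := by
    intro n
    refine (hxb n).trans ?_
    calc Cb * ‖e n‖ ≤ Cb * 1 := by
          exact mul_le_mul_of_nonneg_left (hen n) hCb.le
      _ = Cb := mul_one Cb
  obtain ⟨φ, hφmono, hφcauchy⟩ := aux_rosenthal (𝕜 := 𝕜) x Cb hxbound hnol1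
  set D := diagCMM (𝕜 := 𝕜) (p := p) (q := q) hp' hq' hN hNqp with hD
  set A : ContinuousMultilinearMap 𝕜 (fun _ : Fin N => X) Y :=
    (J.compContinuousMultilinearMap D).compContinuousLinearMap (fun _ => π) with hA
  refine ⟨A, ?_⟩
  intro hwsc
  set u : ℕ → X := fun k => x (φ (2*k+1)) - x (φ (2*k)) with hu
  have hweak : ∀ f : X →L[𝕜] 𝕜, Tendsto (fun k => f (u k)) atTop (nhds (f 0)) := by
    intro f
    rw [map_zero]
    obtain ⟨l, hl⟩ := cauchySeq_tendsto_of_complete (hφcauchy f)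
    have t1 : Tendsto (fun k : ℕ => 2*k+1) atTop atTop :=
      (show StrictMono (fun k : ℕ => 2*k+1) by intro a b hab; dsimp only; omega).tendsto_atTop
    have t2 : Tendsto (fun k : ℕ => 2*k) atTop atTop :=
      (show StrictMono (fun k : ℕ => 2*k) by intro a b hab; dsimp only; omega).tendsto_atTop
    have h1 : Tendsto (fun k => f (x (φ (2*k+1)))) atTop (nhds l) := hl.comp t1
    have h2 : Tendsto (fun k => f (x (φ (2*k)))) atTop (nhds l) := hl.comp t2
    have := h1.sub h2
    rw [sub_self] at this
    convert this using 2 with k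
    rw [hu]
    simp [map_sub]
  have htend := hwsc u 0 hweak
  have hAzero : A (fun _ => (0:X)) = 0 := by
    have : (fun _ : Fin N => (0:X)) = fun i : Fin N => (0 : X) := rfl
    exact A.map_coord_zero ⟨0, hN⟩ rfl
  -- lower bound for the diagonal values
  have hAval : ∀ k, cJ ≤ ‖A (fun _ => u k)‖ := by
    intro k
    have happ : A (fun _ => u k) = J (D (fun _ => π (u k))) := rfl
    have hcoord : (D (fun _ : Fin N => π (u k)) : ∀ _ : ℕ, 𝕜) (φ (2*k+1)) = 1 := by
      rw [hD, diagCMM_apply]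
      have hπu : π (u k) = e (φ (2*k+1)) - e (φ (2*k)) := by
        rw [hu, map_sub, hx, hx]
      have hval : (π (u k) : ∀ _ : ℕ, 𝕜) (φ (2*k+1)) = 1 := by
        rw [hπu, lp.coeFn_sub, Pi.sub_apply, he]
        have hne : φ (2*k) ≠ φ (2*k+1) := by
          intro hcontra
          exact absurd (hφmono.injective hcontra) (by omega)
        rw [lp.single_apply, lp.single_apply]
        simp [Ne.symm hne]
      rw [Finset.prod_congr rfl (fun j _ => hval)]
      simp
    have hD1 : (1:ℝ) ≤ ‖D (fun _ : Fin N => π (u k))‖ := by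
      have := lp.norm_apply_le_norm (by
        intro hq0
        rw [hq0] at hq
        exact (not_lt_of_ge (zero_le : (0:ℝ≥0∞) ≤ 1)) hq) (D (fun _ : Fin N => π (u k))) (φ (2*k+1))
      rw [hcoord] at this
      simpa using this
    calc cJ = cJ * 1 := (mul_one cJ).symm
      _ ≤ cJ * ‖D (fun _ : Fin N => π (u k))‖ := by
          exact mul_le_mul_of_nonneg_left hD1 hcJ.le
      _ ≤ ‖J (D (fun _ : Fin N => π (u k)))‖ := hJ _
      _ = ‖A (fun _ => u k)‖ := by rw [happ]
  rw [hAzero] at htend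
  have hnormtend : Tendsto (fun k => ‖A (fun _ => u k)‖) atTop (nhds 0) := by
    simpa using htend.norm
  have := (hnormtend.eventually (gt_mem_nhds hcJ)).exists
  obtain ⟨k, hk⟩ := this
  exact absurd (hAval k) (not_le_of_gt hk)
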